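/- arXiv:cs/0503065 — 2 statements merged into one kernel-verified Lean document; each statement's English description precedes it below -/
import Mathlib

section
/- Let Γ be a commutative square in the category of graphs with span G₁ ← G₀ → G₂ and cospan G₁ → G₃ ← G₂ (with morphisms ψ₁, ψ₂). If the underlying square of node sets is a pushout in Set, and every labeled node of G₃ lies in ψ₁(N₁^Ω) or ψ₂(N₂^Ω), then Γ is a pushout in the category of graphs. -/
open CategoryTheory

/-- A graph over a signature `Ω` with arity function `ar`: nodes, an (implicit) subset of
labeled nodes (those where `label` is `some`), and a successor function assigning to each
labeled node a string of nodes whose length is the arity of its label. Unlabeled nodes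
have no successors. -/
structure SigGraph (Ω : Type) (ar : Ω → ℕ) where
  N : Type
  label : N → Option Ω
  succ : N → List N
  hlen : ∀ n f, label n = some f → (succ n).length = ar f
  hnone : ∀ n, label n = none → succ n = []

namespace SigGraph

variable {Ω : Type} {ar : Ω → ℕ}

/-- A graph homomorphism: a map on nodes preserving labeledness, labels and successors. -/
@[ext]
structure Hom (G H : SigGraph Ω ar) where
  toFun : G.N → H.N
  map_label : ∀ n f, G.label n = some f → H.label (toFun n) = some f
  map_succ : ∀ n f, G.label n = some f → H.succ (toFun n) = (G.succ n).map toFun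

def Hom.id (G : SigGraph Ω ar) : Hom G G :=
  ⟨fun n => n, fun _ _ h => h, fun n _ _ => by simp⟩

def Hom.comp {G H K : SigGraph Ω ar} (φ : Hom G H) (ψ : Hom H K) : Hom G K where
  toFun := fun n => ψ.toFun (φ.toFun n)
  map_label := fun n f h => ψ.map_label _ f (φ.map_label n f h)
  map_succ := fun n f h => by
    rw [ψ.map_succ _ f (φ.map_label n f h), φ.map_succ n f h, List.map_map]; rfl

instance : Category (SigGraph Ω ar) where
  Hom := Hom
  id := Hom.id
  comp := Hom.comp
  id_comp := by intros; rfl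
  comp_id := by intros; rfl
  assoc := by intros; rfl

/-- An edge of a graph: a labeled node together with a position among its successors. -/
def Edge (G : SigGraph Ω ar) := Σ n : G.N, Fin (G.succ n).length

lemma Edge.label_isSome {G : SigGraph Ω ar} (e : G.Edge) : (G.label e.1).isSome := by
  have h2 : 0 < (G.succ e.1).length := Nat.lt_of_le_of_lt (Nat.zero_le _) e.2.isLt
  cases hl : G.label e.1 with
  | none => rw [G.hnone e.1 hl] at h2; simp at h2
  | some f => rfl

/-- The image of an edge under a homomorphism. -/
def Hom.edgeMap {G H : SigGraph Ω ar} (φ : Hom G H) (e : G.Edge) : H.Edge :=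
  ⟨φ.toFun e.1, ⟨e.2, by
    obtain ⟨f, hf⟩ := Option.isSome_iff_exists.mp e.label_isSome
    rw [φ.map_succ e.1 f hf, List.length_map]; exact e.2.isLt⟩⟩

open Classical in
/-- The disconnected graph `D(G,E)`: nodes of `G` plus a fresh unlabeled node `n[i]`
for each edge `(n,i) ∈ E`, with each edge of `E` redirected to its fresh node. -/
noncomputable def D (G : SigGraph Ω ar) (E : Set G.Edge) : SigGraph Ω ar where
  N := G.N ⊕ {e : G.Edge // e ∈ E}
  label := Sum.elim G.label fun _ => none
  succ := Sum.elim
    (fun n => List.ofFn fun i : Fin (G.succ n).length =>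
      if h : (⟨n, i⟩ : G.Edge) ∈ E then Sum.inr ⟨⟨n, i⟩, h⟩ else Sum.inl ((G.succ n).get i))
    (fun _ => [])
  hlen := by
    rintro (n | e) f h
    · simpa using G.hlen n f h
    · simp at h
  hnone := by
    rintro (n | e) h
    · simp only [Sum.elim_inl] at h ⊢
      simp [List.ofFn_eq_nil_iff, G.hnone n h]
    · rfl

/-- The connection homomorphism `δ_{G,E} : D(G,E) → G`. -/
noncomputable def delta (G : SigGraph Ω ar) (E : Set G.Edge) : Hom (G.D E) G where
  toFun := Sum.elim (fun n => n) (fun e => (G.succ e.1.1).get e.1.2)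
  map_label := by
    rintro (n | e) f h
    · exact h
    · simp [D] at h
  map_succ := by
    rintro (n | e) f h
    · simp only [D, Sum.elim_inl, List.map_ofFn]
      apply List.ext_getElem
      · simp
      · intro i h1 h2
        simp only [List.getElem_ofFn, Function.comp_apply]
        split <;> simp [List.get_eq_getElem]
    · simp [D] at h
end SigGraph
namespace SigGraph
variable {Ω : Type} {ar : Ω → ℕ}

/-- The underlying node map of the disconnected homomorphism `D_{φ,E}`. -/
def dmapFun {G H : SigGraph Ω ar} (φ : Hom G H) (E : Set G.Edge) :
    (G.D E).N → (H.D (φ.edgeMap '' E)).N :=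
  Sum.elim (fun n => Sum.inl (φ.toFun n))
    (fun e => Sum.inr ⟨φ.edgeMap e.1, Set.mem_image_of_mem _ e.2⟩)

/-- `μ` is `Ω`-injective if it is injective on labeled nodes. -/
def OmegaInjective {G H : SigGraph Ω ar} (μ : Hom G H) : Prop :=
  ∀ n n', (G.label n).isSome → (G.label n').isSome → μ.toFun n = μ.toFun n' → n = n'

/-- The conditions on the right leg `ρ : D(L,E) → R` of an LRR-rewrite rule:
unlabeled nodes of `L` are mapped to unlabeled nodes of `R`, injectively. -/
def IsLRRRule {L R : SigGraph Ω ar} (E : Set L.Edge) (ρ : Hom (L.D E) R) : Prop :=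
  (∀ n : L.N, L.label n = none → R.label (ρ.toFun (Sum.inl n)) = none) ∧
  (∀ n n' : L.N, L.label n = none → L.label n' = none →
      ρ.toFun (Sum.inl n) = ρ.toFun (Sum.inl n') → n = n')

section Span
variable {G₀ G₁ G₂ : SigGraph Ω ar}

/-- The relation on `N₁ + N₂` generated by a span: `φ₁(n₀) ∼ φ₂(n₀)`. -/
def spanRel (φ₁ : Hom G₀ G₁) (φ₂ : Hom G₀ G₂) : (G₁.N ⊕ G₂.N) → (G₁.N ⊕ G₂.N) → Prop :=
  fun x y => ∃ n₀, x = Sum.inl (φ₁.toFun n₀) ∧ y = Sum.inr (φ₂.toFun n₀)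

/-- Label of a node of the disjoint union. -/
def nodeLabel (G₁ G₂ : SigGraph Ω ar) : (G₁.N ⊕ G₂.N) → Option Ω :=
  Sum.elim G₁.label G₂.label

/-- Successors of a node of the disjoint union. -/
def nodeSucc (G₁ G₂ : SigGraph Ω ar) : (G₁.N ⊕ G₂.N) → List (G₁.N ⊕ G₂.N) :=
  Sum.elim (fun n => (G₁.succ n).map Sum.inl) (fun n => (G₂.succ n).map Sum.inr)

/-- A span of graphs is strongly labeled if in each equivalence class all labeled
nodes share the same label and have pairwise equivalent successors. -/
def StronglyLabeled (φ₁ : Hom G₀ G₁) (φ₂ : Hom G₀ G₂) : Prop :=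
  ∀ x y, Relation.EqvGen (spanRel φ₁ φ₂) x y →
    ∀ f g, nodeLabel G₁ G₂ x = some f → nodeLabel G₁ G₂ y = some g →
      f = g ∧ List.Forall₂ (Relation.EqvGen (spanRel φ₁ φ₂)) (nodeSucc G₁ G₂ x) (nodeSucc G₁ G₂ y)

open Classical in
/-- The candidate pushout graph of a span: nodes are the quotient of `N₁ + N₂`,
labeled classes are those containing a labeled node, labels and successors are
taken from a (chosen) labeled representative. -/
noncomputable def pushoutGraph (φ₁ : Hom G₀ G₁) (φ₂ : Hom G₀ G₂) : SigGraph Ω ar where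
  N := Quot (spanRel φ₁ φ₂)
  label := fun c =>
    if h : ∃ x, Quot.mk _ x = c ∧ (nodeLabel G₁ G₂ x).isSome
    then nodeLabel G₁ G₂ h.choose else none
  succ := fun c =>
    if h : ∃ x, Quot.mk _ x = c ∧ (nodeLabel G₁ G₂ x).isSome
    then (nodeSucc G₁ G₂ h.choose).map (Quot.mk _) else []
  hlen := by
    intro c f h
    try dsimp only at h ⊢
    by_cases hx : ∃ x, Quot.mk _ x = c ∧ (nodeLabel G₁ G₂ x).isSome
    · rw [dif_pos hx] at h ⊢
      rw [List.length_map]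
      rcases hc : hx.choose with n | n <;> rw [hc] at h <;>
        simp only [nodeLabel, nodeSucc, Sum.elim_inl, Sum.elim_inr] at h ⊢ <;>
        rw [List.length_map]
      · exact G₁.hlen n f h
      · exact G₂.hlen n f h
    · rw [dif_neg hx] at h; simp at h
  hnone := by
    intro c h
    try dsimp only at h ⊢
    by_cases hx : ∃ x, Quot.mk _ x = c ∧ (nodeLabel G₁ G₂ x).isSome
    · rw [dif_pos hx] at h
      have := hx.choose_spec.2
      rw [h] at this; simp at this
    · rw [dif_neg hx]

end Span

open Classical in
/-- The disconnected graph `D̄(G,o)`: `G` plus a fresh unlabeled node `mr`, with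
all edges targeting `o` redirected to `mr`. -/
noncomputable def Dbar (G : SigGraph Ω ar) (o : G.N) : SigGraph Ω ar where
  N := G.N ⊕ Unit
  label := Sum.elim G.label fun _ => none
  succ := Sum.elim
    (fun n => (G.succ n).map fun t => if t = o then Sum.inr () else Sum.inl t)
    (fun _ => [])
  hlen := by
    rintro (n | u) f h
    · simp only [Sum.elim_inl] at h ⊢
      rw [List.length_map]; exact G.hlen n f h
    · simp at h
  hnone := by
    rintro (n | u) h
    · simp only [Sum.elim_inl] at h ⊢
      rw [G.hnone n h]; rfl
    · rfl

open Classical in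
/-- The homomorphism `δ_μ : D̄(G,o) → G`, identity on `N_G`, sending `mr` to `o`. -/
noncomputable def deltaBar (G : SigGraph Ω ar) (o : G.N) : Hom (G.Dbar o) G where
  toFun := Sum.elim (fun n => n) fun _ => o
  map_label := by
    rintro (n | u) f h
    · exact h
    · simp [Dbar] at h
  map_succ := by
    rintro (n | u) f h
    · simp only [Dbar, Sum.elim_inl, List.map_map]
      symm
      refine (List.map_congr_left ?_).trans (List.map_id _)
      intro t ht
      by_cases h' : t = o <;> simp [h']
    · simp [Dbar] at h

open Classical in
/-- The graph obtained from `U` by redirecting all edges targeting `a` towards `b`. -/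
noncomputable def redirect (U : SigGraph Ω ar) (a b : U.N) : SigGraph Ω ar where
  N := U.N
  label := U.label
  succ := fun n => (U.succ n).map fun t => if t = a then b else t
  hlen := by intro n f h; (try dsimp only); rw [List.length_map]; exact U.hlen n f h
  hnone := by intro n h; (try dsimp only); rw [U.hnone n h]; rfl

/-- The graph `P` with two unlabeled nodes: `false` is `ar`, `true` is `pr`. -/
def P (Ω : Type) (ar : Ω → ℕ) : SigGraph Ω ar :=
  ⟨Bool, fun _ => none, fun _ => [], fun _ _ h => by simp at h, fun _ _ => rfl⟩

/-- The switch graph `SW` with three unlabeled nodes: `some false` is `ar`,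
`some true` is `pr`, `none` is `mr`. -/
def SW (Ω : Type) (ar : Ω → ℕ) : SigGraph Ω ar :=
  ⟨Option Bool, fun _ => none, fun _ => [], fun _ _ h => by simp at h, fun _ _ => rfl⟩

/-- `λ : SW → P`, sending `ar, mr ↦ ar` and `pr ↦ pr`. -/
def lamGR : Hom (SW Ω ar) (P Ω ar) :=
  ⟨fun x => x.getD false, fun _ _ h => by simp [SW] at h, fun _ _ h => by simp [SW] at h⟩

/-- `ρ : SW → P`, sending `ar ↦ ar` and `pr, mr ↦ pr`. -/
def rhoGR : Hom (SW Ω ar) (P Ω ar) :=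
  ⟨fun x => x.getD true, fun _ _ h => by simp [SW] at h, fun _ _ h => by simp [SW] at h⟩

/-- `D̄_μ : SW → D̄(U, μ(ar))`. -/
noncomputable def dbarMu {U : SigGraph Ω ar} (μ : Hom (P Ω ar) U) :
    Hom (SW Ω ar) (U.Dbar (μ.toFun false)) where
  toFun := fun x => match x with
    | some b => Sum.inl (μ.toFun b)
    | none => Sum.inr ()
  map_label := fun _ _ h => by simp [SW] at h
  map_succ := fun _ _ h => by simp [SW] at h

/-- A graph with a single unlabeled node. -/
def oneUnlabeled (Ω : Type) (ar : Ω → ℕ) : SigGraph Ω ar :=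
  ⟨PUnit, fun _ => none, fun _ => [], fun _ _ h => by simp at h, fun _ _ => rfl⟩

/-- A graph with a single node labeled `a` (looping on itself `ar a` times). -/
def singleLabeled (a : Ω) : SigGraph Ω ar :=
  ⟨PUnit, fun _ => some a, fun _ => List.replicate (ar a) PUnit.unit,
   fun _ f h => by cases h; simp, fun _ h => by simp at h⟩

/-- The unique homomorphism from the one-point unlabeled graph to `singleLabeled a`. -/
def toSingle (a : Ω) : Hom (oneUnlabeled Ω ar) (singleLabeled a) :=
  ⟨fun _ => PUnit.unit, fun _ _ h => by simp [oneUnlabeled] at h,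
   fun _ _ h => by simp [oneUnlabeled] at h⟩

end SigGraph

/-- Pushout recognition: a commutative square of graphs whose node-set
square is a pushout in `Set` and such that every labeled node of the apex is the image
of a labeled node along one of the two cospan legs, is a pushout in the category of graphs. -/
theorem pushout_of_graphs_from_pushout_of_sets {Ω : Type} {ar : Ω → ℕ}
    {G₀ G₁ G₂ G₃ : SigGraph Ω ar}
    (φ₁ : SigGraph.Hom G₀ G₁) (φ₂ : SigGraph.Hom G₀ G₂)
    (ψ₁ : SigGraph.Hom G₁ G₃) (ψ₂ : SigGraph.Hom G₂ G₃)
    (hcomm : φ₁.comp ψ₁ = φ₂.comp ψ₂)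
    (hset : IsPushout (C := Type) (TypeCat.ofHom φ₁.toFun) (TypeCat.ofHom φ₂.toFun)
      (TypeCat.ofHom ψ₁.toFun) (TypeCat.ofHom ψ₂.toFun))
    (hcover : ∀ n₃ : G₃.N, (G₃.label n₃).isSome →
      (∃ n₁, (G₁.label n₁).isSome ∧ ψ₁.toFun n₁ = n₃) ∨
      (∃ n₂, (G₂.label n₂).isSome ∧ ψ₂.toFun n₂ = n₃)) :
    IsPushout (C := SigGraph Ω ar) φ₁ φ₂ ψ₁ ψ₂ := by
  apply IsPushout.of_isColimit' ⟨hcomm⟩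
  apply Limits.PushoutCocone.IsColimit.mk
  case desc =>
    intro s
    have hw : (TypeCat.ofHom φ₁.toFun ≫ TypeCat.ofHom s.inl.toFun : G₀.N ⟶ s.pt.N) = TypeCat.ofHom φ₂.toFun ≫ TypeCat.ofHom s.inr.toFun := by
      refine ConcreteCategory.hom_ext _ _ fun n => ?_
      exact congrArg (fun h => SigGraph.Hom.toFun h n) s.condition
    refine ⟨hset.desc (TypeCat.ofHom s.inl.toFun) (TypeCat.ofHom s.inr.toFun) hw, ?_, ?_⟩
    · intro n₃ f h
      rcases hcover n₃ (by rw [h]; rfl) with ⟨n₁, h1, rfl⟩ | ⟨n₂, h2, rfl⟩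
      · obtain ⟨g, hg⟩ := Option.isSome_iff_exists.mp h1
        have : G₃.label (ψ₁.toFun n₁) = some g := ψ₁.map_label n₁ g hg
        rw [h] at this; obtain rfl := (Option.some.injEq _ _ ▸ this).symm
        have e : hset.desc (TypeCat.ofHom s.inl.toFun) (TypeCat.ofHom s.inr.toFun) hw (ψ₁.toFun n₁) = s.inl.toFun n₁ :=
          ConcreteCategory.congr_hom (hset.inl_desc (TypeCat.ofHom s.inl.toFun) (TypeCat.ofHom s.inr.toFun) hw) n₁
        rw [e]; exact s.inl.map_label n₁ g hg
      · obtain ⟨g, hg⟩ := Option.isSome_iff_exists.mp h2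
        have : G₃.label (ψ₂.toFun n₂) = some g := ψ₂.map_label n₂ g hg
        rw [h] at this; obtain rfl := (Option.some.injEq _ _ ▸ this).symm
        have e : hset.desc (TypeCat.ofHom s.inl.toFun) (TypeCat.ofHom s.inr.toFun) hw (ψ₂.toFun n₂) = s.inr.toFun n₂ :=
          ConcreteCategory.congr_hom (hset.inr_desc (TypeCat.ofHom s.inl.toFun) (TypeCat.ofHom s.inr.toFun) hw) n₂
        rw [e]; exact s.inr.map_label n₂ g hg
    · intro n₃ f h
      rcases hcover n₃ (by rw [h]; rfl) with ⟨n₁, h1, rfl⟩ | ⟨n₂, h2, rfl⟩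
      · obtain ⟨g, hg⟩ := Option.isSome_iff_exists.mp h1
        have hlab : G₃.label (ψ₁.toFun n₁) = some g := ψ₁.map_label n₁ g hg
        rw [h] at hlab; obtain rfl := (Option.some.injEq _ _ ▸ hlab).symm
        have e : hset.desc (TypeCat.ofHom s.inl.toFun) (TypeCat.ofHom s.inr.toFun) hw (ψ₁.toFun n₁) = s.inl.toFun n₁ :=
          ConcreteCategory.congr_hom (hset.inl_desc (TypeCat.ofHom s.inl.toFun) (TypeCat.ofHom s.inr.toFun) hw) n₁
        rw [e, s.inl.map_succ n₁ g hg, ψ₁.map_succ n₁ g hg, List.map_map]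
        apply List.map_congr_left
        intro a _
        exact (ConcreteCategory.congr_hom (hset.inl_desc (TypeCat.ofHom s.inl.toFun) (TypeCat.ofHom s.inr.toFun) hw) a).symm
      · obtain ⟨g, hg⟩ := Option.isSome_iff_exists.mp h2
        have hlab : G₃.label (ψ₂.toFun n₂) = some g := ψ₂.map_label n₂ g hg
        rw [h] at hlab; obtain rfl := (Option.some.injEq _ _ ▸ hlab).symm
        have e : hset.desc (TypeCat.ofHom s.inl.toFun) (TypeCat.ofHom s.inr.toFun) hw (ψ₂.toFun n₂) = s.inr.toFun n₂ :=
          ConcreteCategory.congr_hom (hset.inr_desc (TypeCat.ofHom s.inl.toFun) (TypeCat.ofHom s.inr.toFun) hw) n₂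
        rw [e, s.inr.map_succ n₂ g hg, ψ₂.map_succ n₂ g hg, List.map_map]
        apply List.map_congr_left
        intro a _
        exact (ConcreteCategory.congr_hom (hset.inr_desc (TypeCat.ofHom s.inl.toFun) (TypeCat.ofHom s.inr.toFun) hw) a).symm
  case fac_left =>
    intro s
    apply SigGraph.Hom.ext
    funext n
    exact ConcreteCategory.congr_hom (hset.inl_desc (TypeCat.ofHom s.inl.toFun) (TypeCat.ofHom s.inr.toFun) _) n
  case fac_right =>
    intro s
    apply SigGraph.Hom.ext
    funext n
    exact ConcreteCategory.congr_hom (hset.inr_desc (TypeCat.ofHom s.inl.toFun) (TypeCat.ofHom s.inr.toFun) _) n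
  case uniq =>
    intro s m hl hr
    apply SigGraph.Hom.ext
    have := hset.hom_ext (k := TypeCat.ofHom m.toFun)
      (l := hset.desc (TypeCat.ofHom s.inl.toFun) (TypeCat.ofHom s.inr.toFun) (by
        refine ConcreteCategory.hom_ext _ _ fun n => ?_; exact congrArg (fun h => SigGraph.Hom.toFun h n) s.condition))
      (by rw [hset.inl_desc]; refine ConcreteCategory.hom_ext _ _ fun n => ?_; exact congrArg (fun h => SigGraph.Hom.toFun h n) hl)
      (by rw [hset.inr_desc]; refine ConcreteCategory.hom_ext _ _ fun n => ?_; exact congrArg (fun h => SigGraph.Hom.toFun h n) hr)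
    exact congrArg (fun (f : G₃.N ⟶ s.pt.N) => (f : G₃.N → s.pt.N)) this
end

section
/- Let μ : L → U be an Ω-injective graph homomorphism and let L ← D(L,E) → R be an LRR-rewrite rule with right leg ρ. In the equivalence relation ∼ on N_R + N_{D(U,μ(E))} generated by D_{μ,E}(n) ∼ ρ(n) for n ∈ N_{D(L,E)}, the restriction of the quotient map to the labeled nodes of R is injective: if n_R, n_R' are labeled nodes of R with n_R ∼ n_R', then n_R = n_R'. -/
open CategoryTheory

namespace SigGraph

variable {Ω : Type} {ar : Ω → ℕ} {L R U : SigGraph Ω ar} {E : Set L.Edge}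

lemma edgeMap_inj (μ : Hom L U) (hμ : OmegaInjective μ)
    {e e' : L.Edge} (h : μ.edgeMap e = μ.edgeMap e') : e = e' := by
  obtain ⟨n, i⟩ := e; obtain ⟨n', i'⟩ := e'
  have h1 : μ.toFun n = μ.toFun n' := congrArg Sigma.fst h
  have hn : n = n' := hμ n n' (Edge.label_isSome ⟨n, i⟩) (Edge.label_isSome ⟨n', i'⟩) h1
  subst hn
  have h2 := congrArg (fun s : U.Edge => (s.2 : ℕ)) h
  simp only [Hom.edgeMap] at h2
  exact congrArg (Sigma.mk n) (Fin.ext h2)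

open Classical in
/-- Auxiliary invariant on `U`-nodes. -/
noncomputable def phiU (ρ : Hom (L.D E) R) (μ : Hom L U) (u : U.N) : U.N ⊕ R.N :=
  if h : ∃ m : L.N, (L.label m).isSome ∧ μ.toFun m = u
  then Sum.inr (ρ.toFun (Sum.inl h.choose)) else Sum.inl u

open Classical in
/-- Auxiliary invariant on `R`-nodes. -/
noncomputable def phiR (ρ : Hom (L.D E) R) (μ : Hom L U) (r : R.N) : U.N ⊕ R.N :=
  if h : ∃ m : L.N, L.label m = none ∧ ρ.toFun (Sum.inl m) = r
  then phiU ρ μ (μ.toFun h.choose) else Sum.inr r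

/-- Auxiliary invariant on the disjoint union `N_{D(U,μ(E))} + N_R`. -/
noncomputable def phi (ρ : Hom (L.D E) R) (μ : Hom L U) :
    (U.D (μ.edgeMap '' E)).N ⊕ R.N → U.N ⊕ R.N :=
  Sum.elim
    (Sum.elim (phiU ρ μ)
      (fun eh => phiR ρ μ (ρ.toFun (Sum.inr ⟨eh.2.choose, eh.2.choose_spec.1⟩))))
    (phiR ρ μ)

lemma phiU_labeled (ρ : Hom (L.D E) R) {μ : Hom L U} (hμ : OmegaInjective μ)
    {m : L.N} (hm : (L.label m).isSome) :
    phiU ρ μ (μ.toFun m) = Sum.inr (ρ.toFun (Sum.inl m)) := by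
  have h : ∃ m' : L.N, (L.label m').isSome ∧ μ.toFun m' = μ.toFun m := ⟨m, hm, rfl⟩
  rw [phiU, dif_pos h]
  rw [hμ h.choose m h.choose_spec.1 hm h.choose_spec.2]

lemma phiR_labeled {ρ : Hom (L.D E) R} (μ : Hom L U) (hrule : IsLRRRule E ρ)
    {r : R.N} (hr : (R.label r).isSome) : phiR ρ μ r = Sum.inr r := by
  rw [phiR, dif_neg]
  rintro ⟨m, hm, hρ⟩
  have := hrule.1 m hm
  rw [hρ] at this
  rw [this] at hr
  simp at hr

lemma phiR_unlabeled {ρ : Hom (L.D E) R} (μ : Hom L U) (hrule : IsLRRRule E ρ)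
    {m : L.N} (hm : L.label m = none) :
    phiR ρ μ (ρ.toFun (Sum.inl m)) = phiU ρ μ (μ.toFun m) := by
  have h : ∃ m' : L.N, L.label m' = none ∧ ρ.toFun (Sum.inl m') = ρ.toFun (Sum.inl m) :=
    ⟨m, hm, rfl⟩
  rw [phiR, dif_pos h]
  rw [hrule.2 h.choose m h.choose_spec.1 hm h.choose_spec.2]

end SigGraph

/-- In the equivalence relation generated by `D_{μ,E}(n) ∼ ρ(n)` on
`N_{D(U,μ(E))} + N_R`, the quotient map is injective on labeled nodes of `R`. -/
theorem quotient_injective_on_labeled_R {Ω : Type} {ar : Ω → ℕ} {L R U : SigGraph Ω ar}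
    (E : Set L.Edge) (ρ : SigGraph.Hom (L.D E) R) (hrule : SigGraph.IsLRRRule E ρ)
    (μ : SigGraph.Hom L U) (hμ : SigGraph.OmegaInjective μ) :
    ∀ d : SigGraph.Hom (L.D E) (U.D (μ.edgeMap '' E)), d.toFun = SigGraph.dmapFun μ E →
      ∀ n n' : R.N, (R.label n).isSome → (R.label n').isSome →
        Relation.EqvGen (SigGraph.spanRel d ρ) (Sum.inr n) (Sum.inr n') → n = n' := by
  intro d hd n n' hn hn' hrel
  have hcons : ∀ x y, SigGraph.spanRel d ρ x y → SigGraph.phi ρ μ x = SigGraph.phi ρ μ y := by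
    rintro x y ⟨a, rfl, rfl⟩
    rw [hd]
    rcases a with m | e
    · rcases hm : L.label m with _ | f
      · show SigGraph.phiU ρ μ (μ.toFun m) = SigGraph.phiR ρ μ (ρ.toFun (Sum.inl m))
        rw [SigGraph.phiR_unlabeled μ hrule hm]
      · have hml : (L.label m).isSome := by rw [hm]; rfl
        have hρl : (R.label (ρ.toFun (Sum.inl m))).isSome := by
          rw [ρ.map_label (Sum.inl m) f hm]; rfl
        show SigGraph.phiU ρ μ (μ.toFun m) = SigGraph.phiR ρ μ (ρ.toFun (Sum.inl m))
        rw [SigGraph.phiU_labeled ρ hμ hml, SigGraph.phiR_labeled μ hrule hρl]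
    · show SigGraph.phiR ρ μ _ = SigGraph.phiR ρ μ (ρ.toFun (Sum.inr e))
      congr 2
      have h := (Set.mem_image_of_mem μ.edgeMap e.2 :
        μ.edgeMap e.1 ∈ μ.edgeMap '' E)
      have he : h.choose = e.1 := SigGraph.edgeMap_inj μ hμ h.choose_spec.2
      exact congrArg Sum.inr (Subtype.ext he)
  have heqv : ∀ x y, Relation.EqvGen (SigGraph.spanRel d ρ) x y →
      SigGraph.phi ρ μ x = SigGraph.phi ρ μ y := by
    intro x y h
    induction h with
    | rel _ _ h => exact hcons _ _ h
    | refl => rfl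
    | symm _ _ _ ih => exact ih.symm
    | trans _ _ _ _ _ ih1 ih2 => exact ih1.trans ih2
  have h1 := heqv _ _ hrel
  have h2 : SigGraph.phi ρ μ (Sum.inr n) = Sum.inr n := SigGraph.phiR_labeled μ hrule hn
  have h3 : SigGraph.phi ρ μ (Sum.inr n') = Sum.inr n' := SigGraph.phiR_labeled μ hrule hn'
  rw [h2, h3] at h1
  exact Sum.inr.inj h1
end
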